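/- arXiv:2109.01763 — 4 statements merged into one kernel-verified Lean document; each statement's English description precedes it below -/
import Mathlib

section
/- Let G be a group, X ⊆ G a subset, m a natural number, and a, b : Fin m → G two lists of elements. Suppose l is a list of elements of X whose product x = l.prod satisfies x⁻¹ · aᵢ · x = bᵢ for all i, and l has minimal length among all lists of elements of X whose product conjugates the list a to the list b. Then the map sending j ∈ {0, 1, ..., l.length} to the tuple (x_j⁻¹ · a₁ · x_j, ..., x_j⁻¹ · a_m · x_j), where x_j is the product of the first j entries of l, is injective. -/
/-- The prefix-conjugate-tuple map of a minimal-length conjugating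
word is injective. -/
theorem stmt_0 {G : Type*} [Group G] (X : Set G) (m : ℕ) (a b : Fin m → G)
    (l : List G) (hlX : ∀ g ∈ l, g ∈ X)
    (hconj : ∀ i : Fin m, l.prod⁻¹ * a i * l.prod = b i)
    (hmin : ∀ l' : List G, (∀ g ∈ l', g ∈ X) →
      (∀ i : Fin m, l'.prod⁻¹ * a i * l'.prod = b i) → l.length ≤ l'.length) :
    Function.Injective
      (fun j : Fin (l.length + 1) =>
        fun i : Fin m => ((l.take j).prod)⁻¹ * a i * (l.take j).prod) := by
  have key : ∀ s t : Fin (l.length + 1), s < t →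
      (∀ i : Fin m, ((l.take s).prod)⁻¹ * a i * (l.take s).prod
        = ((l.take t).prod)⁻¹ * a i * (l.take t).prod) → False := by
    intro s t hst heq
    set l' := l.take s ++ l.drop t with hl'
    have hs := s.isLt
    have ht := t.isLt
    have hst' : (s : ℕ) < (t : ℕ) := hst
    have hlen' : l'.length < l.length := by
      simp only [hl', List.length_append, List.length_take, List.length_drop]
      omega
    have hX' : ∀ g ∈ l', g ∈ X := by
      intro g hg
      rcases List.mem_append.mp hg with h | h
      · exact hlX g (List.mem_of_mem_take h)
      · exact hlX g (List.mem_of_mem_drop h)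
    have hsplit : (l.take t).prod * (l.drop t).prod = l.prod := by
      rw [← List.prod_append, List.take_append_drop]
    have hconj' : ∀ i, l'.prod⁻¹ * a i * l'.prod = b i := by
      intro i
      calc l'.prod⁻¹ * a i * l'.prod
          = (l.drop t).prod⁻¹ * ((l.take s).prod⁻¹ * a i * (l.take s).prod)
              * (l.drop t).prod := by
            rw [hl', List.prod_append]; group
        _ = (l.drop t).prod⁻¹ * ((l.take t).prod⁻¹ * a i * (l.take t).prod)
              * (l.drop t).prod := by rw [heq i]
        _ = l.prod⁻¹ * a i * l.prod := by rw [← hsplit]; group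
        _ = b i := hconj i
    exact absurd (hmin l' hX' hconj') (not_le.mpr hlen')
  intro j1 j2 h
  have heq : ∀ i, ((l.take j1).prod)⁻¹ * a i * (l.take j1).prod
      = ((l.take j2).prod)⁻¹ * a i * (l.take j2).prod := fun i => congrFun h i
  rcases lt_trichotomy j1 j2 with hlt | heq' | hgt
  · exact absurd (key j1 j2 hlt heq) id
  · exact heq'
  · exact absurd (key j2 j1 hgt (fun i => (heq i).symm)) id
end

section
/- Let G be a group, X ⊆ G, m ≥ 1, and a, b : Fin m → G two lists of elements. Suppose l is a list of elements of X whose product x = l.prod satisfies x⁻¹ · aᵢ · x = bᵢ for all i, and l has minimal length among all lists of elements of X whose product conjugates the list a to the list b. If T is a finite subset of G such that for every i ∈ Fin m and every j ∈ {0, ..., l.length} the element x_j⁻¹ · aᵢ · x_j lies in T, where x_j is the product of the first j entries of l, then l.length + 1 ≤ |T|^m; in particular l.length ≤ |T|^m − 1. -/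
/-- Quantitative pigeonhole bound on the length of a
minimal-length conjugating word. -/
theorem stmt_1 {G : Type*} [Group G] (X : Set G) (m : ℕ) (hm : 1 ≤ m)
    (a b : Fin m → G) (l : List G) (hlX : ∀ g ∈ l, g ∈ X)
    (hconj : ∀ i : Fin m, l.prod⁻¹ * a i * l.prod = b i)
    (hmin : ∀ l' : List G, (∀ g ∈ l', g ∈ X) →
      (∀ i : Fin m, l'.prod⁻¹ * a i * l'.prod = b i) → l.length ≤ l'.length)
    (T : Finset G)
    (hT : ∀ (i : Fin m) (j : ℕ), j ≤ l.length →
      ((l.take j).prod)⁻¹ * a i * (l.take j).prod ∈ T) :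
    l.length + 1 ≤ T.card ^ m ∧ l.length ≤ T.card ^ m - 1 := by
  have key : ∀ j₁ j₂ : ℕ, j₁ < j₂ → j₂ ≤ l.length →
      (∀ i : Fin m, ((l.take j₁).prod)⁻¹ * a i * (l.take j₁).prod =
        ((l.take j₂).prod)⁻¹ * a i * (l.take j₂).prod) → False := by
    intro j₁ j₂ hlt hle heq
    set l' : List G := l.take j₁ ++ l.drop j₂ with hl'
    have hmem : ∀ g ∈ l', g ∈ X := by
      intro g hg
      rcases List.mem_append.1 hg with h | h
      · exact hlX g (List.mem_of_mem_take h)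
      · exact hlX g (List.mem_of_mem_drop h)
    have hsplit : l.prod = (l.take j₂).prod * (l.drop j₂).prod := by
      rw [← List.prod_append, List.take_append_drop]
    have hconj' : ∀ i : Fin m, l'.prod⁻¹ * a i * l'.prod = b i := by
      intro i
      have := hconj i
      rw [hsplit] at this
      rw [hl', List.prod_append]
      rw [← this]
      have h := heq i
      have aux : ∀ u v g : G, (u * v)⁻¹ * g * (u * v) = v⁻¹ * (u⁻¹ * g * u) * v := by
        intro u v g; group
      rw [aux, aux, h]
    have hlen := hmin l' hmem hconj'
    have : l'.length = j₁ + (l.length - j₂) := by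
      simp [hl', List.length_take, List.length_drop]
      omega
    omega
  have h1 : l.length + 1 ≤ T.card ^ m := by
    let f : Fin (l.length + 1) → (Fin m → T) := fun j i =>
      ⟨((l.take (j : ℕ)).prod)⁻¹ * a i * (l.take (j : ℕ)).prod,
        hT i j (by omega)⟩
    have hinj : Function.Injective f := by
      intro j₁ j₂ hfeq
      by_contra hne
      rcases lt_or_gt_of_ne (fun h => hne (Fin.ext h) : (j₁ : ℕ) ≠ j₂) with h | h
      · exact key j₁ j₂ h (by omega) (fun i => congrArg Subtype.val (congrFun hfeq i))
      · exact key j₂ j₁ h (by omega) (fun i => (congrArg Subtype.val (congrFun hfeq i)).symm)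
    calc l.length + 1 = Fintype.card (Fin (l.length + 1)) := (Fintype.card_fin _).symm
      _ ≤ Fintype.card (Fin m → T) := Fintype.card_le_of_injective f hinj
      _ = T.card ^ m := by simp [Fintype.card_fun]
  exact ⟨h1, by omega⟩
end

section
/- Let G be a group, X ⊆ G, m a natural number, and a, b : Fin m → G two lists of elements. Let l = [g₁, ..., g_ℓ] be a list of elements of X with product x satisfying x⁻¹ · aᵢ · x = bᵢ for all i. Suppose 0 ≤ s < t ≤ ℓ are such that, writing x_j for the product of the first j entries of l, one has x_s⁻¹ · aᵢ · x_s = x_t⁻¹ · aᵢ · x_t for all i ∈ Fin m. Then the element y = x_s · x_t⁻¹ · x satisfies y⁻¹ · aᵢ · y = bᵢ for all i, and y is the product of the list obtained by concatenating the first s entries of l with the entries of l after position t; in particular y is a product of s + ℓ − t < ℓ elements of X. -/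
/-- Equal prefix-conjugate tuples at positions `s < t` yield a
strictly shorter conjugating element `x_s * x_t⁻¹ * x`. -/
theorem stmt_2 {G : Type*} [Group G] (X : Set G) (m : ℕ) (a b : Fin m → G)
    (l : List G) (hlX : ∀ g ∈ l, g ∈ X)
    (hconj : ∀ i : Fin m, l.prod⁻¹ * a i * l.prod = b i)
    (s t : ℕ) (hst : s < t) (ht : t ≤ l.length)
    (heq : ∀ i : Fin m,
      ((l.take s).prod)⁻¹ * a i * (l.take s).prod =
        ((l.take t).prod)⁻¹ * a i * (l.take t).prod) :
    (∀ i : Fin m,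
        ((l.take s).prod * ((l.take t).prod)⁻¹ * l.prod)⁻¹ * a i *
          ((l.take s).prod * ((l.take t).prod)⁻¹ * l.prod) = b i) ∧
    (l.take s).prod * ((l.take t).prod)⁻¹ * l.prod = (l.take s ++ l.drop t).prod ∧
    (l.take s ++ l.drop t).length = s + l.length - t ∧
    s + l.length - t < l.length := by

  have hx : l.prod = (l.take t).prod * (l.drop t).prod := by
    rw [← List.prod_append, List.take_append_drop]
  refine ⟨?_, ?_, ?_, ?_⟩
  · intro i
    have h := heq i
    have := hconj i
    calc ((l.take s).prod * ((l.take t).prod)⁻¹ * l.prod)⁻¹ * a i *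
          ((l.take s).prod * ((l.take t).prod)⁻¹ * l.prod)
        = l.prod⁻¹ * ((l.take t).prod *
            (((l.take s).prod)⁻¹ * a i * (l.take s).prod) * ((l.take t).prod)⁻¹) * l.prod := by
          group
      _ = l.prod⁻¹ * a i * l.prod := by rw [h]; group
      _ = b i := hconj i
  · rw [List.prod_append, hx]; group
  · simp [List.length_take, List.length_drop, Nat.min_eq_left (le_of_lt (lt_of_lt_of_le hst ht))]
    omega
  · omega
end

section
/- Let G be a group, X a finite subset of G, m ≥ 1, and a, b : Fin m → G two lists with a injective. Suppose l is a list of elements of X whose product x = l.prod satisfies x⁻¹ · aᵢ · x = bᵢ for all i, and l has minimal length among all lists of elements of X whose product conjugates the list a to the list b. Suppose further that C is a natural number such that for every i ∈ Fin m and every j ∈ {0, ..., l.length}, the element x_j⁻¹ · aᵢ · x_j is the product of some list of at most C elements of X, where x_j is the product of the first j entries of l. Then l.length + 1 ≤ (∑_{k=0}^{C} |X|^k)^m. -/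
/-- Abstract form of the paper's Theorem 2: the length of a
minimal conjugating word is bounded by `(∑_{k=0}^{C} |X|^k)^m`. -/
theorem stmt_5 {G : Type*} [Group G] (X : Finset G) (m : ℕ) (hm : 1 ≤ m)
    (a b : Fin m → G) (ha : Function.Injective a)
    (l : List G) (hlX : ∀ g ∈ l, g ∈ X)
    (hconj : ∀ i : Fin m, l.prod⁻¹ * a i * l.prod = b i)
    (hmin : ∀ l' : List G, (∀ g ∈ l', g ∈ X) →
      (∀ i : Fin m, l'.prod⁻¹ * a i * l'.prod = b i) → l.length ≤ l'.length)
    (C : ℕ)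
    (hC : ∀ (i : Fin m) (j : ℕ), j ≤ l.length →
      ∃ w : List G, (∀ y ∈ w, y ∈ X) ∧ w.length ≤ C ∧
        w.prod = ((l.take j).prod)⁻¹ * a i * (l.take j).prod) :
    l.length + 1 ≤ (∑ k ∈ Finset.range (C + 1), X.card ^ k) ^ m := by
  classical
  set L := l.length with hL
  set S : Finset G := (Finset.range (C+1)).biUnion (fun k =>
    Finset.image (fun f : Fin k → X => (List.ofFn (fun i => ((f i : G)))).prod)
      Finset.univ) with hSdef
  have hmemS : ∀ (j : ℕ), j ≤ L → ∀ i : Fin m,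
      ((l.take j).prod)⁻¹ * a i * (l.take j).prod ∈ S := by
    intro j hj i
    obtain ⟨w, hwX, hwlen, hwprod⟩ := hC i j hj
    refine Finset.mem_biUnion.mpr ⟨w.length, Finset.mem_range.mpr (by omega), ?_⟩
    refine Finset.mem_image.mpr
      ⟨fun i => ⟨w.get i, hwX _ (List.get_mem w i)⟩, Finset.mem_univ _, ?_⟩
    show (List.ofFn w.get).prod = _
    rw [List.ofFn_get]
    exact hwprod
  -- key shortening argument
  have key : ∀ j j' : ℕ, j < j' → j' ≤ L →
      (∀ i : Fin m, ((l.take j).prod)⁻¹ * a i * (l.take j).prod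
          = ((l.take j').prod)⁻¹ * a i * (l.take j').prod) → False := by
    intro j j' hlt hle heq
    set l' := l.take j ++ l.drop j' with hl'
    have hl'X : ∀ g ∈ l', g ∈ X := by
      intro g hg
      rcases List.mem_append.mp hg with h | h
      · exact hlX g (List.take_subset j l h)
      · exact hlX g (List.drop_subset j' l h)
    have hconj' : ∀ i : Fin m, l'.prod⁻¹ * a i * l'.prod = b i := by
      intro i
      have h1 : l'.prod = (l.take j).prod * (l.drop j').prod := List.prod_append
      have h2 : l.prod = (l.take j').prod * (l.drop j').prod := by
        conv_lhs => rw [← List.take_append_drop j' l]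
        rw [List.prod_append]
      set t := (l.take j).prod
      set t' := (l.take j').prod
      set d := (l.drop j').prod
      have e1 : (t * d)⁻¹ * a i * (t * d) = d⁻¹ * (t⁻¹ * a i * t) * d := by group
      have e2 : (t' * d)⁻¹ * a i * (t' * d) = d⁻¹ * (t'⁻¹ * a i * t') * d := by group
      rw [h1, e1, heq i, ← e2, ← h2, hconj i]
    have hlen := hmin l' hl'X hconj'
    have hlen' : l'.length = j + (L - j') := by
      simp [hl', List.length_take, List.length_drop, ← hL]
      omega
    omega
  -- pigeonhole
  let F : Fin (L + 1) → (Fin m → S) := fun j i =>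
    ⟨((l.take j.val).prod)⁻¹ * a i * (l.take j.val).prod,
      hmemS j.val (by omega) i⟩
  have hF : Function.Injective F := by
    intro j j' h
    have heq : ∀ i : Fin m, ((l.take j.val).prod)⁻¹ * a i * (l.take j.val).prod
        = ((l.take j'.val).prod)⁻¹ * a i * (l.take j'.val).prod := by
      intro i
      exact congrArg Subtype.val (congrFun h i)
    by_contra hne
    have hvne : j.val ≠ j'.val := fun e => hne (Fin.ext e)
    rcases hvne.lt_or_gt with hlt | hlt
    · exact key j.val j'.val hlt (by omega) heq
    · exact key j'.val j.val hlt (by omega) (fun i => (heq i).symm)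
  have hcard := Fintype.card_le_of_injective F hF
  have hc1 : Fintype.card (Fin (L + 1)) = L + 1 := Fintype.card_fin _
  have hc2 : Fintype.card (Fin m → S) = S.card ^ m := by
    rw [Fintype.card_fun]
    simp [Fintype.card_coe]
  rw [hc1, hc2] at hcard
  have hS : S.card ≤ ∑ k ∈ Finset.range (C + 1), X.card ^ k := by
    refine le_trans Finset.card_biUnion_le ?_
    apply Finset.sum_le_sum
    intro k _
    refine le_trans Finset.card_image_le ?_
    simp [Fintype.card_coe]
  exact le_trans hcard (Nat.pow_le_pow_left hS m)
end
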